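/- For 1 ≤ i, j ≤ q let ℛ(e_i,e_j) : Q → Q be the linear map e_k ↦ Σ_{l=1}^q R_{ijkl}·e_l, acting on an alternating p-form α (1 ≤ p ≤ q) by (ℛ(e_i,e_j)·α)(Z_1,…,Z_p) = −Σ_{a=1}^p α(Z_1,…,ℛ(e_i,e_j)Z_a,…,Z_p). Define the alternating p-form R(α) := −Σ_{i,j=1}^q e_j♭ ∧ (e_i ⌟ (ℛ(e_i,e_j)·α)). Then ⟨R(α), α⟩ = Σ_{i,j=1}^q Ric_{ij}·⟨e_i⌟α, e_j⌟α⟩ − (1/2)·Σ_{i,j,k,l=1}^q R_{ijkl}·⟨(e_j∧e_i)⌟α, (e_l∧e_k)⌟α⟩, where Ric_{ij} = Σ_{l=1}^q R_{lilj}. -/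

import Mathlib

open scoped BigOperators RealInnerProductSpace

variable {Q : Type*} [NormedAddCommGroup Q] [InnerProductSpace ℝ Q]

/-- Inner product of two `p`-forms with respect to an orthonormal frame `e`:
`⟨α,β⟩ = (1/p!) ∑_{i₁,…,i_p} α(e_{i₁},…,e_{i_p}) β(e_{i₁},…,e_{i_p})`. -/
noncomputable def formInner {q p : ℕ} (e : Fin q → Q)
    (α β : AlternatingMap ℝ Q ℝ (Fin p)) : ℝ :=
  (1 / (Nat.factorial p : ℝ)) * ∑ f : Fin p → Fin q, α (e ∘ f) * β (e ∘ f)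

/-- Interior product `X ⌟ α` of a vector with a `p`-form (zero when `p = 0`).
The interior product with a decomposable `2`-vector is then `(X∧Y)⌟α = X⌟(Y⌟α)`,
i.e. `((X∧Y)⌟α)(Z₁,…) = α(Y,X,Z₁,…)`. -/
noncomputable def iprod : ∀ {p : ℕ}, Q → AlternatingMap ℝ Q ℝ (Fin p) →
    AlternatingMap ℝ Q ℝ (Fin (p - 1))
  | 0, _, _ => 0
  | _ + 1, X, α => α.curryLeft X

/-- The curvature operator `ℛ(e_i,e_j) : Q → Q`, `e_k ↦ ∑_l R_{ijkl} e_l`, extended linearly. -/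
noncomputable def curvMap {q : ℕ} (e : Fin q → Q) (R : Fin q → Fin q → Fin q → Fin q → ℝ)
    (i j : Fin q) (v : Q) : Q :=
  ∑ k : Fin q, ∑ l : Fin q, (R i j k l * ⟪e k, v⟫) • e l

/-- The derivation action of `ℛ(e_i,e_j)` on a `p`-form:
`(ℛ(e_i,e_j)·α)(Z₁,…,Z_p) = −∑_a α(Z₁,…,ℛ(e_i,e_j)Z_a,…,Z_p)`, evaluated at a tuple `Z`. -/
noncomputable def curvAct {q n : ℕ} (e : Fin q → Q) (R : Fin q → Fin q → Fin q → Fin q → ℝ)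
    (i j : Fin q) (α : AlternatingMap ℝ Q ℝ (Fin (n + 1))) (Z : Fin (n + 1) → Q) : ℝ :=
  -∑ a : Fin (n + 1), α (Function.update Z a (curvMap e R i j (Z a)))

/-- The component of the `p`-form `R(α) = −∑_{i,j} e_j♭ ∧ (e_i ⌟ (ℛ(e_i,e_j)·α))` on the basis
tuple `(e_{f 0},…,e_{f p₋₁})`, the wedge with the `1`-form `e_j♭` being expanded as
`(e_j♭∧β)(Z₀,…) = ∑_t (−1)^t ⟨e_j, Z_t⟩ β(Z₀,…,Ẑ_t,…)`. -/
noncomputable def RalphaComp {q n : ℕ} (e : Fin q → Q)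
    (R : Fin q → Fin q → Fin q → Fin q → ℝ) (α : AlternatingMap ℝ Q ℝ (Fin (n + 1)))
    (f : Fin (n + 1) → Fin q) : ℝ :=
  -∑ i : Fin q, ∑ j : Fin q, ∑ t : Fin (n + 1),
    (-1 : ℝ) ^ (t : ℕ) * ⟪e j, e (f t)⟫ *
      curvAct e R i j α (Fin.cons (e i) (e ∘ f ∘ t.succAbove))

/- ===== helpers (to be inserted above stmt8) ===== -/

theorem aux8_moveFront {n : ℕ} (α : AlternatingMap ℝ Q ℝ (Fin (n+1))) (Z : Fin (n+1) → Q)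
    (t : Fin (n+1)) :
    α (Fin.cons (Z t) (Z ∘ t.succAbove)) = (-1 : ℝ) ^ (t : ℕ) * α Z := by
  have hfun : Fin.cons (Z t) (Z ∘ t.succAbove) = Z ∘ ⇑(t.cycleRange)⁻¹ := by
    funext x
    induction x using Fin.cases with
    | zero =>
      simp only [Fin.cons_zero, Function.comp_apply]
      congr 1
      rw [Equiv.Perm.inv_def, Equiv.eq_symm_apply, Fin.cycleRange_self]
    | succ j =>
      simp only [Fin.cons_succ, Function.comp_apply]
      congr 1
      rw [Equiv.Perm.inv_def, Equiv.eq_symm_apply, Fin.cycleRange_succAbove]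
  rw [hfun, AlternatingMap.map_perm, map_inv, Fin.sign_cycleRange]
  rcases Nat.even_or_odd (t : ℕ) with h | h
  · simp [h.neg_one_pow, Even.neg_one_pow (α := ℝ) h]
  · simp [h.neg_one_pow, Odd.neg_one_pow (α := ℝ) h]

theorem aux8_consMove {n : ℕ} (α : AlternatingMap ℝ Q ℝ (Fin (n+2))) (x : Q)
    (u : Fin (n+1) → Q) (s : Fin (n+1)) :
    α (Fin.cons x (Fin.cons (u s) (u ∘ s.succAbove)))
      = (-1 : ℝ) ^ (s : ℕ) * α (Fin.cons x u) := by
  have h := aux8_moveFront (α.curryLeft x) u s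
  simp at h
  exact h

theorem aux8_consUpdate {n : ℕ} (α : AlternatingMap ℝ Q ℝ (Fin (n+2))) (x y : Q)
    (u : Fin (n+1) → Q) (s : Fin (n+1)) :
    α (Fin.cons x (Function.update u s y))
      = (-1 : ℝ) ^ (s : ℕ) * α (Fin.cons x (Fin.cons y (u ∘ s.succAbove))) := by
  have h := aux8_consMove α x (Function.update u s y) s
  rw [Function.update_self] at h
  have hc : (Function.update u s y) ∘ s.succAbove = u ∘ s.succAbove := by
    funext j
    simp [Function.update_apply, Fin.succAbove_ne s j]
  rw [hc] at h
  have hsq : ((-1:ℝ)^(s:ℕ))*((-1:ℝ)^(s:ℕ)) = 1 := by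
    rw [← pow_add]
    exact Even.neg_one_pow ⟨(s:ℕ), rfl⟩
  rw [h, ← mul_assoc, hsq, one_mul]

theorem aux8_swapFirst {n : ℕ} (α : AlternatingMap ℝ Q ℝ (Fin (n+2))) (x y : Q)
    (h : Fin n → Q) :
    α (Fin.cons y (Fin.cons x h)) = - α (Fin.cons x (Fin.cons y h)) := by
  have hm := aux8_moveFront α (Fin.cons x (Fin.cons y h)) 1
  have h1 : (Fin.cons x (Fin.cons y h) : Fin (n+2) → Q) 1 = y := rfl
  have h2 : (Fin.cons x (Fin.cons y h) : Fin (n+2) → Q) ∘ (1 : Fin (n+2)).succAbove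
      = Fin.cons x h := by
    funext j
    induction j using Fin.cases with
    | zero =>
      have : (1 : Fin (n+2)).succAbove 0 = 0 := by
        rw [Fin.succAbove_of_castSucc_lt]
        · rfl
        · simp [Fin.lt_def]
      simp [Function.comp_apply, this]
    | succ k =>
      have : (1 : Fin (n+2)).succAbove k.succ = k.succ.succ := by
        rw [Fin.succAbove_of_le_castSucc]
        simp [Fin.le_def]
      simp [Function.comp_apply, this]
  rw [h1, h2] at hm
  rw [hm]
  simp

theorem aux8_reindexSum {q n : ℕ} (t : Fin (n+1)) (F : Fin q → (Fin n → Fin q) → ℝ) :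
    ∑ f : Fin (n+1) → Fin q, F (f t) (f ∘ t.succAbove)
      = ∑ j : Fin q, ∑ g : Fin n → Fin q, F j g := by
  have h1 : ∑ p : Fin q × (Fin n → Fin q), F p.1 p.2
      = ∑ j : Fin q, ∑ g : Fin n → Fin q, F j g := Fintype.sum_prod_type _
  rw [← h1]
  exact Fintype.sum_equiv (Fin.insertNthEquiv (fun _ => Fin q) t).symm _ _ (fun f => rfl)

theorem aux8_sswap23 {ι M : Type*} [Fintype ι] [AddCommMonoid M] (F : ι → ι → ι → ι → M) :
    ∑ a, ∑ b, ∑ c, ∑ d, F a b c d = ∑ a, ∑ b, ∑ c, ∑ d, F a c b d :=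
  Finset.sum_congr rfl fun _ _ => Finset.sum_comm

theorem aux8_sswap34 {ι M : Type*} [Fintype ι] [AddCommMonoid M] (F : ι → ι → ι → ι → M) :
    ∑ a, ∑ b, ∑ c, ∑ d, F a b c d = ∑ a, ∑ b, ∑ c, ∑ d, F a b d c :=
  Finset.sum_congr rfl fun _ _ => Finset.sum_congr rfl fun _ _ => Finset.sum_comm

theorem aux8_keyAlg {q : ℕ} (R P : Fin q → Fin q → Fin q → Fin q → ℝ)
    (hR1 : ∀ i j k l, R i j k l = - R j i k l)
    (hR2 : ∀ i j k l, R i j k l = - R i j l k)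
    (hR3 : ∀ i j k l, R i j k l = R k l i j)
    (hBianchi : ∀ i j k l, R i j k l + R j k i l + R k i j l = 0)
    (hP1 : ∀ a b c d, P a b d c = - P a b c d) :
    ∑ i, ∑ j, ∑ k, ∑ l, R i j k l * P i l j k
      = -(1/2) * ∑ i, ∑ j, ∑ k, ∑ l, R i j k l * P i j k l := by
  set X := ∑ i, ∑ j, ∑ k, ∑ l, R i j k l * P i k j l with hX
  have hY : ∑ i, ∑ j, ∑ k, ∑ l, R i j k l * P i l j k = -X := by
    rw [aux8_sswap34 (fun a b c d => R a b c d * P a d b c)]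
    rw [hX, ← Finset.sum_neg_distrib]
    refine Finset.sum_congr rfl fun a _ => ?_
    rw [← Finset.sum_neg_distrib]
    refine Finset.sum_congr rfl fun b _ => ?_
    rw [← Finset.sum_neg_distrib]
    refine Finset.sum_congr rfl fun c _ => ?_
    rw [← Finset.sum_neg_distrib]
    refine Finset.sum_congr rfl fun d _ => ?_
    rw [hR2 a b c d]; ring
  have hX' : ∑ a, ∑ b, ∑ c, ∑ d, R a c b d * P a b c d = X := by
    rw [hX, aux8_sswap23 (fun a b c d => R a b c d * P a c b d)]
  have hZ : ∑ a, ∑ b, ∑ c, ∑ d, R a d b c * P a b c d = -X := by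
    rw [aux8_sswap34 (fun a b c d => R a d b c * P a b c d), ← hX', ← Finset.sum_neg_distrib]
    refine Finset.sum_congr rfl fun a _ => ?_
    rw [← Finset.sum_neg_distrib]
    refine Finset.sum_congr rfl fun b _ => ?_
    rw [← Finset.sum_neg_distrib]
    refine Finset.sum_congr rfl fun c _ => ?_
    rw [← Finset.sum_neg_distrib]
    refine Finset.sum_congr rfl fun d _ => ?_
    rw [hP1 a b c d]; ring
  have hT : ∑ i, ∑ j, ∑ k, ∑ l, R i j k l * P i j k l = 2 * X := by
    have hpt : ∀ a b c d, R a b c d = R a c b d - R a d b c := by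
      intro a b c d
      have hb := hBianchi a b c d
      have h1 : R b c a d = R a d b c := (hR3 b c a d)
      have h2 : R c a b d = - R a c b d := hR1 c a b d
      linarith
    calc ∑ i, ∑ j, ∑ k, ∑ l, R i j k l * P i j k l
        = (∑ a, ∑ b, ∑ c, ∑ d, R a c b d * P a b c d)
          - ∑ a, ∑ b, ∑ c, ∑ d, R a d b c * P a b c d := by
          rw [← Finset.sum_sub_distrib]
          refine Finset.sum_congr rfl fun a _ => ?_
          rw [← Finset.sum_sub_distrib]
          refine Finset.sum_congr rfl fun b _ => ?_
          rw [← Finset.sum_sub_distrib]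
          refine Finset.sum_congr rfl fun c _ => ?_
          rw [← Finset.sum_sub_distrib]
          refine Finset.sum_congr rfl fun d _ => ?_
          rw [hpt a b c d]; ring
      _ = 2 * X := by rw [hX', hZ]; ring
  rw [hY, hT]; ring

theorem aux8_curvMap_basis {q : ℕ} (e : OrthonormalBasis (Fin q) ℝ Q)
    (R : Fin q → Fin q → Fin q → Fin q → ℝ) (i j m : Fin q) :
    curvMap ⇑e R i j (e m) = ∑ l, R i j m l • e l := by
  unfold curvMap
  rw [Finset.sum_comm]
  refine Finset.sum_congr rfl fun l _ => ?_
  simp [orthonormal_iff_ite.mp e.orthonormal, mul_ite, ite_smul, Finset.sum_ite_eq']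

theorem aux8_curvAct_basis {q n : ℕ} (e : OrthonormalBasis (Fin q) ℝ Q)
    (R : Fin q → Fin q → Fin q → Fin q → ℝ) (i j : Fin q)
    (α : AlternatingMap ℝ Q ℝ (Fin (n + 1))) (F : Fin (n+1) → Fin q) :
    curvAct ⇑e R i j α (⇑e ∘ F)
      = -∑ a : Fin (n+1), ∑ l : Fin q, R i j (F a) l * α (⇑e ∘ Function.update F a l) := by
  unfold curvAct
  congr 1
  refine Finset.sum_congr rfl fun a _ => ?_
  have h1 : (⇑e ∘ F) a = e (F a) := rfl
  rw [h1, aux8_curvMap_basis]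
  rw [show ⇑α = ⇑α.toMultilinearMap from rfl]
  rw [α.toMultilinearMap.map_update_sum Finset.univ a (fun l => R i j (F a) l • e l) (⇑e ∘ F)]
  refine Finset.sum_congr rfl fun l _ => ?_
  rw [α.toMultilinearMap.map_update_smul, smul_eq_mul]
  congr 2
  funext b
  simp [Function.update_apply]
  split <;> rfl

/-- For curvature coefficients `R` with the symmetries of a Riemann tensor and a `p`-form `α`
with `1 ≤ p ≤ q` (here `p = n+1`),
`⟨R(α),α⟩ = ∑_{i,j} Ric_{ij}⟨e_i⌟α,e_j⌟α⟩ − (1/2)∑_{i,j,k,l} R_{ijkl}⟨(e_j∧e_i)⌟α,(e_l∧e_k)⌟α⟩`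
with `Ric_{ij} = ∑_l R_{lilj}`. -/
theorem stmt8 {q n : ℕ} (hpq : n + 1 ≤ q) (e : OrthonormalBasis (Fin q) ℝ Q)
    (R : Fin q → Fin q → Fin q → Fin q → ℝ)
    (hR1 : ∀ i j k l, R i j k l = - R j i k l)
    (hR2 : ∀ i j k l, R i j k l = - R i j l k)
    (hR3 : ∀ i j k l, R i j k l = R k l i j)
    (hBianchi : ∀ i j k l, R i j k l + R j k i l + R k i j l = 0)
    (α : AlternatingMap ℝ Q ℝ (Fin (n + 1))) :
    (1 / (Nat.factorial (n + 1) : ℝ)) *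
        ∑ f : Fin (n + 1) → Fin q, RalphaComp ⇑e R α f * α (⇑e ∘ f)
      = (∑ i : Fin q, ∑ j : Fin q,
            (∑ l : Fin q, R l i l j) * formInner ⇑e (iprod (e i) α) (iprod (e j) α))
        - (1 / 2 : ℝ) * ∑ i : Fin q, ∑ j : Fin q, ∑ k : Fin q, ∑ l : Fin q,
            R i j k l *
              formInner ⇑e (iprod (e j) (iprod (e i) α)) (iprod (e l) (iprod (e k) α)) := by
  classical
  have hA' : ∀ (f : Fin (n+1) → Fin q) (t : Fin (n+1)),
      α (⇑e ∘ Fin.cons (f t) (f ∘ t.succAbove)) = (-1:ℝ)^(t:ℕ) * α (⇑e ∘ f) := by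
    intro f t
    have hc : ⇑e ∘ Fin.cons (f t) (f ∘ t.succAbove)
        = Fin.cons ((⇑e ∘ f) t) ((⇑e ∘ f) ∘ t.succAbove) := by
      rw [Fin.comp_cons]; rfl
    rw [hc]; exact aux8_moveFront α (⇑e ∘ f) t
  have hcurv2 : ∀ (f : Fin (n+1) → Fin q) (i : Fin q) (t : Fin (n+1)),
      curvAct ⇑e R i (f t) α (Fin.cons (e i) (⇑e ∘ f ∘ t.succAbove))
      = -((∑ l, R i (f t) i l * α (⇑e ∘ Fin.cons l (f ∘ t.succAbove)))
        + ∑ s : Fin n, ∑ l, R i (f t) ((f ∘ t.succAbove) s) l *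
            α (⇑e ∘ Fin.cons i (Function.update (f ∘ t.succAbove) s l))) := by
    intro f i t
    have hc : Fin.cons (e i) (⇑e ∘ f ∘ t.succAbove) = ⇑e ∘ Fin.cons i (f ∘ t.succAbove) :=
      (Fin.comp_cons ⇑e i (f ∘ t.succAbove)).symm
    rw [hc, aux8_curvAct_basis e R i (f t) α (Fin.cons i (f ∘ t.succAbove))]
    congr 1
    rw [Fin.sum_univ_succ]
    congr 1
    · refine Finset.sum_congr rfl fun l _ => ?_
      rw [Fin.cons_zero, Fin.update_cons_zero]
    · refine Finset.sum_congr rfl fun s _ => (Finset.sum_congr rfl fun l _ => ?_)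
      rw [Fin.cons_succ, ← Fin.cons_update]
  have hRa : ∀ f : Fin (n+1) → Fin q, RalphaComp ⇑e R α f
      = ∑ i, ∑ t : Fin (n+1), (-1:ℝ)^(t:ℕ) *
          ((∑ l, R i (f t) i l * α (⇑e ∘ Fin.cons l (f ∘ t.succAbove)))
           + ∑ s : Fin n, ∑ l, R i (f t) ((f ∘ t.succAbove) s) l *
               α (⇑e ∘ Fin.cons i (Function.update (f ∘ t.succAbove) s l))) := by
    intro f
    have hin : ∀ j k : Fin q, ⟪e j, e k⟫ = if j = k then (1:ℝ) else 0 :=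
      orthonormal_iff_ite.mp e.orthonormal
    unfold RalphaComp
    have hswap : (∑ i : Fin q, ∑ j : Fin q, ∑ t : Fin (n+1),
        (-1 : ℝ) ^ (t : ℕ) * ⟪e j, e (f t)⟫ *
          curvAct ⇑e R i j α (Fin.cons (e i) (⇑e ∘ f ∘ t.succAbove)))
        = ∑ i : Fin q, ∑ t : Fin (n+1), ∑ j : Fin q,
        (-1 : ℝ) ^ (t : ℕ) * ⟪e j, e (f t)⟫ *
          curvAct ⇑e R i j α (Fin.cons (e i) (⇑e ∘ f ∘ t.succAbove)) :=
      Finset.sum_congr rfl fun i _ => Finset.sum_comm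
    rw [hswap]
    simp only [hin, mul_ite, mul_one, mul_zero, ite_mul, zero_mul, Finset.sum_ite_eq',
      Finset.mem_univ, if_true, hcurv2 f, mul_neg, Finset.sum_neg_distrib, neg_neg]
  have h1 : ∀ f : Fin (n+1) → Fin q, RalphaComp ⇑e R α f * α (⇑e ∘ f)
      = (∑ t : Fin (n+1), ∑ i, ∑ l, R i (f t) i l * α (⇑e ∘ Fin.cons l (f ∘ t.succAbove))
            * α (⇑e ∘ Fin.cons (f t) (f ∘ t.succAbove)))
        + ∑ t : Fin (n+1), ∑ s : Fin n, ∑ i, ∑ l,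
            R i (f t) ((f ∘ t.succAbove) s) l
              * α (⇑e ∘ Fin.cons i (Function.update (f ∘ t.succAbove) s l))
              * α (⇑e ∘ Fin.cons (f t) (f ∘ t.succAbove)) := by
    intro f
    rw [hRa f]
    simp only [hA']
    simp only [Finset.sum_mul, mul_add, add_mul, Finset.mul_sum, Finset.sum_add_distrib]
    congr 1
    · refine Finset.sum_comm.trans ?_
      exact Finset.sum_congr rfl fun t _ => Finset.sum_congr rfl fun i _ =>
        Finset.sum_congr rfl fun l _ => by ring
    · refine Finset.sum_comm.trans ?_
      refine (Finset.sum_congr rfl fun t _ => Finset.sum_comm).trans ?_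
      exact Finset.sum_congr rfl fun t _ => Finset.sum_congr rfl fun s _ =>
        Finset.sum_congr rfl fun i _ => Finset.sum_congr rfl fun l _ => by ring
  have hLHS : ∑ f : Fin (n+1) → Fin q, RalphaComp ⇑e R α f * α (⇑e ∘ f)
      = (∑ t : Fin (n+1), ∑ f : Fin (n+1) → Fin q, ∑ i, ∑ l,
          R i (f t) i l * α (⇑e ∘ Fin.cons l (f ∘ t.succAbove))
            * α (⇑e ∘ Fin.cons (f t) (f ∘ t.succAbove)))
        + ∑ t : Fin (n+1), ∑ s : Fin n, ∑ f : Fin (n+1) → Fin q, ∑ i, ∑ l,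
          R i (f t) ((f ∘ t.succAbove) s) l
            * α (⇑e ∘ Fin.cons i (Function.update (f ∘ t.succAbove) s l))
            * α (⇑e ∘ Fin.cons (f t) (f ∘ t.succAbove)) := by
    rw [Finset.sum_congr rfl fun f (_ : f ∈ Finset.univ) => h1 f, Finset.sum_add_distrib]
    congr 1
    · exact Finset.sum_comm
    · refine Finset.sum_comm.trans ?_
      exact Finset.sum_congr rfl fun t _ => Finset.sum_comm
  -- part 1
  have hpart1 : (∑ t : Fin (n+1), ∑ f : Fin (n+1) → Fin q, ∑ i, ∑ l,
        R i (f t) i l * α (⇑e ∘ Fin.cons l (f ∘ t.succAbove))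
          * α (⇑e ∘ Fin.cons (f t) (f ∘ t.succAbove)))
      = ((n:ℝ)+1) * ∑ j, ∑ g : Fin n → Fin q, ∑ i, ∑ l,
          R i j i l * α (⇑e ∘ Fin.cons l g) * α (⇑e ∘ Fin.cons j g) := by
    calc (∑ t : Fin (n+1), ∑ f : Fin (n+1) → Fin q, ∑ i, ∑ l,
        R i (f t) i l * α (⇑e ∘ Fin.cons l (f ∘ t.succAbove))
          * α (⇑e ∘ Fin.cons (f t) (f ∘ t.succAbove)))
        = ∑ t : Fin (n+1), ∑ j, ∑ g : Fin n → Fin q, ∑ i, ∑ l,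
            R i j i l * α (⇑e ∘ Fin.cons l g) * α (⇑e ∘ Fin.cons j g) :=
          Finset.sum_congr rfl fun t _ => aux8_reindexSum t
            (fun j g => ∑ i, ∑ l, R i j i l * α (⇑e ∘ Fin.cons l g) * α (⇑e ∘ Fin.cons j g))
      _ = ((n:ℝ)+1) * ∑ j, ∑ g : Fin n → Fin q, ∑ i, ∑ l,
            R i j i l * α (⇑e ∘ Fin.cons l g) * α (⇑e ∘ Fin.cons j g) := by
          rw [Finset.sum_const, Finset.card_univ, Fintype.card_fin, nsmul_eq_mul]
          push_cast; ring
  have hbridge1 : (∑ j, ∑ g : Fin n → Fin q, ∑ i, ∑ l,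
        R i j i l * α (⇑e ∘ Fin.cons l g) * α (⇑e ∘ Fin.cons j g))
      = ∑ i, ∑ j, ∑ g : Fin n → Fin q, ∑ l,
          R l i l j * (α (⇑e ∘ Fin.cons i g) * α (⇑e ∘ Fin.cons j g)) := by
    calc (∑ j, ∑ g : Fin n → Fin q, ∑ i, ∑ l,
        R i j i l * α (⇑e ∘ Fin.cons l g) * α (⇑e ∘ Fin.cons j g))
        = ∑ j, ∑ g : Fin n → Fin q, ∑ l, ∑ i,
            R i j i l * α (⇑e ∘ Fin.cons l g) * α (⇑e ∘ Fin.cons j g) :=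
          Finset.sum_congr rfl fun _ _ => Finset.sum_congr rfl fun _ _ => Finset.sum_comm
      _ = ∑ j, ∑ l, ∑ g : Fin n → Fin q, ∑ i,
            R i j i l * α (⇑e ∘ Fin.cons l g) * α (⇑e ∘ Fin.cons j g) :=
          Finset.sum_congr rfl fun _ _ => Finset.sum_comm
      _ = ∑ l, ∑ j, ∑ g : Fin n → Fin q, ∑ i,
            R i j i l * α (⇑e ∘ Fin.cons l g) * α (⇑e ∘ Fin.cons j g) :=
          Finset.sum_comm
      _ = ∑ i, ∑ j, ∑ g : Fin n → Fin q, ∑ l,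
            R l i l j * (α (⇑e ∘ Fin.cons i g) * α (⇑e ∘ Fin.cons j g)) := by
          refine Finset.sum_congr rfl fun a _ => Finset.sum_congr rfl fun b _ =>
            Finset.sum_congr rfl fun g _ => Finset.sum_congr rfl fun c _ => ?_
          rw [hR3 c b c a]; ring
  have hform1 : ∀ i j : Fin q, formInner ⇑e (iprod (e i) α) (iprod (e j) α)
      = (1/(n.factorial : ℝ)) * ∑ g : Fin n → Fin q,
          α (⇑e ∘ Fin.cons i g) * α (⇑e ∘ Fin.cons j g) := by
    intro i j
    unfold formInner
    refine congrArg₂ (· * ·) rfl (Finset.sum_congr rfl fun g _ => ?_)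
    rw [show ⇑e ∘ Fin.cons i g = Fin.cons (e i) (⇑e ∘ g) from Fin.comp_cons ⇑e i g,
        show ⇑e ∘ Fin.cons j g = Fin.cons (e j) (⇑e ∘ g) from Fin.comp_cons ⇑e j g]
    rfl
  have hfacne : (n.factorial : ℝ) ≠ 0 := Nat.cast_ne_zero.mpr n.factorial_ne_zero
  have hfac : ((n+1).factorial : ℝ) = ((n:ℝ)+1) * (n.factorial : ℝ) := by
    rw [Nat.factorial_succ]; push_cast; ring
  have h₁ : (1 / (Nat.factorial (n + 1) : ℝ)) *
        (∑ t : Fin (n+1), ∑ f : Fin (n+1) → Fin q, ∑ i, ∑ l,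
          R i (f t) i l * α (⇑e ∘ Fin.cons l (f ∘ t.succAbove))
            * α (⇑e ∘ Fin.cons (f t) (f ∘ t.succAbove)))
      = ∑ i, ∑ j, (∑ l, R l i l j) * formInner ⇑e (iprod (e i) α) (iprod (e j) α) := by
    rw [hpart1, hbridge1]
    simp only [hform1]
    have hRHS1' : (∑ i, ∑ j, (∑ l, R l i l j) * ((1/(n.factorial : ℝ)) *
          ∑ g : Fin n → Fin q, α (⇑e ∘ Fin.cons i g) * α (⇑e ∘ Fin.cons j g)))
        = (1/(n.factorial : ℝ)) * ∑ i, ∑ j, ∑ g : Fin n → Fin q, ∑ l,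
            R l i l j * (α (⇑e ∘ Fin.cons i g) * α (⇑e ∘ Fin.cons j g)) := by
      simp only [Finset.mul_sum, Finset.sum_mul]
      refine Finset.sum_congr rfl fun i _ => Finset.sum_congr rfl fun j _ =>
        Finset.sum_congr rfl fun g _ => Finset.sum_congr rfl fun l _ => by ring
    rw [hRHS1', hfac]
    field_simp
  rcases n with _ | m
  · -- n = 0 : second curvature term vanishes
    have hS2 : (∑ t : Fin 1, ∑ s : Fin 0, ∑ f : Fin 1 → Fin q, ∑ i, ∑ l,
        R i (f t) ((f ∘ t.succAbove) s) l
          * α (⇑e ∘ Fin.cons i (Function.update (f ∘ t.succAbove) s l))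
          * α (⇑e ∘ Fin.cons (f t) (f ∘ t.succAbove))) = 0 := by simp
    have hz : ∀ a b c d : Fin q,
        formInner ⇑e (iprod (e b) (iprod (e a) α)) (iprod (e d) (iprod (e c) α)) = 0 := by
      intro a b c d
      have h0 : iprod (e b) (iprod (e a) α) = 0 := rfl
      have h0' : iprod (e d) (iprod (e c) α) = 0 := rfl
      rw [h0, h0']
      simp [formInner]
    rw [hLHS, hS2, add_zero, h₁]
    simp [hz]
  · -- n = m + 1
    have hcc : ∀ (x y : Fin q) (h : Fin m → Fin q),
        ⇑e ∘ Fin.cons x (Fin.cons y h) = Fin.cons (e x) (Fin.cons (e y) (⇑e ∘ h)) := by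
      intro x y h
      rw [Fin.comp_cons, Fin.comp_cons]
    have hprod : ∀ (i j l : Fin q) (g : Fin (m+1) → Fin q) (s : Fin (m+1)),
        α (⇑e ∘ Fin.cons i (Function.update g s l)) * α (⇑e ∘ Fin.cons j g)
        = α (⇑e ∘ Fin.cons i (Fin.cons l (g ∘ s.succAbove)))
          * α (⇑e ∘ Fin.cons j (Fin.cons (g s) (g ∘ s.succAbove))) := by
      intro i j l g s
      have hu : ⇑e ∘ Fin.cons i (Function.update g s l)
          = Fin.cons (e i) (Function.update (⇑e ∘ g) s (e l)) := by
        funext b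
        induction b using Fin.cases with
        | zero => simp only [Function.comp_apply, Fin.cons_zero]
        | succ b' =>
          simp only [Function.comp_apply, Fin.cons_succ]
          by_cases hb : b' = s
          · subst hb; simp
          · simp [Function.update_of_ne hb]
      have hx1 : ⇑e ∘ Fin.cons i (Fin.cons l (g ∘ s.succAbove))
          = Fin.cons (e i) (Fin.cons (e l) ((⇑e ∘ g) ∘ s.succAbove)) := by
        rw [Fin.comp_cons, Fin.comp_cons]; rfl
      have hx2 : ⇑e ∘ Fin.cons j (Fin.cons (g s) (g ∘ s.succAbove))
          = Fin.cons (e j) (Fin.cons ((⇑e ∘ g) s) ((⇑e ∘ g) ∘ s.succAbove)) := by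
        rw [Fin.comp_cons, Fin.comp_cons]; rfl
      have hx3 : ⇑e ∘ Fin.cons j g = Fin.cons (e j) (⇑e ∘ g) := Fin.comp_cons _ _ _
      rw [hu, hx1, hx2, hx3, aux8_consUpdate α (e i) (e l) (⇑e ∘ g) s,
        aux8_consMove α (e j) (⇑e ∘ g) s]
      ring
    have hpart2 : (∑ t : Fin (m+2), ∑ s : Fin (m+1), ∑ f : Fin (m+2) → Fin q, ∑ i, ∑ l,
          R i (f t) ((f ∘ t.succAbove) s) l
            * α (⇑e ∘ Fin.cons i (Function.update (f ∘ t.succAbove) s l))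
            * α (⇑e ∘ Fin.cons (f t) (f ∘ t.succAbove)))
        = ((m:ℝ)+2) * (((m:ℝ)+1) * ∑ j, ∑ k, ∑ h : Fin m → Fin q, ∑ i, ∑ l,
            R i j k l * (α (⇑e ∘ Fin.cons i (Fin.cons l h))
              * α (⇑e ∘ Fin.cons j (Fin.cons k h)))) := by
      calc (∑ t : Fin (m+2), ∑ s : Fin (m+1), ∑ f : Fin (m+2) → Fin q, ∑ i, ∑ l,
          R i (f t) ((f ∘ t.succAbove) s) l
            * α (⇑e ∘ Fin.cons i (Function.update (f ∘ t.succAbove) s l))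
            * α (⇑e ∘ Fin.cons (f t) (f ∘ t.succAbove)))
          = ∑ t : Fin (m+2), ∑ s : Fin (m+1), ∑ j, ∑ g : Fin (m+1) → Fin q, ∑ i, ∑ l,
              R i j (g s) l * α (⇑e ∘ Fin.cons i (Function.update g s l))
                * α (⇑e ∘ Fin.cons j g) :=
            Finset.sum_congr rfl fun t _ => Finset.sum_congr rfl fun s _ =>
              aux8_reindexSum t (fun j g => ∑ i, ∑ l, R i j (g s) l
                * α (⇑e ∘ Fin.cons i (Function.update g s l)) * α (⇑e ∘ Fin.cons j g))
        _ = ∑ t : Fin (m+2), ∑ s : Fin (m+1), ∑ j, ∑ g : Fin (m+1) → Fin q, ∑ i, ∑ l,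
              R i j (g s) l * (α (⇑e ∘ Fin.cons i (Fin.cons l (g ∘ s.succAbove)))
                * α (⇑e ∘ Fin.cons j (Fin.cons (g s) (g ∘ s.succAbove)))) := by
            refine Finset.sum_congr rfl fun t _ => Finset.sum_congr rfl fun s _ =>
              Finset.sum_congr rfl fun j _ => Finset.sum_congr rfl fun g _ =>
              Finset.sum_congr rfl fun i _ => Finset.sum_congr rfl fun l _ => ?_
            rw [mul_assoc, hprod i j l g s]
        _ = ∑ t : Fin (m+2), ∑ s : Fin (m+1), ∑ j, ∑ k, ∑ h : Fin m → Fin q, ∑ i, ∑ l,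
              R i j k l * (α (⇑e ∘ Fin.cons i (Fin.cons l h))
                * α (⇑e ∘ Fin.cons j (Fin.cons k h))) :=
            Finset.sum_congr rfl fun t _ => Finset.sum_congr rfl fun s _ =>
              Finset.sum_congr rfl fun j _ => aux8_reindexSum s
                (fun k h => ∑ i, ∑ l, R i j k l * (α (⇑e ∘ Fin.cons i (Fin.cons l h))
                  * α (⇑e ∘ Fin.cons j (Fin.cons k h))))
        _ = ((m:ℝ)+2) * (((m:ℝ)+1) * ∑ j, ∑ k, ∑ h : Fin m → Fin q, ∑ i, ∑ l,
              R i j k l * (α (⇑e ∘ Fin.cons i (Fin.cons l h))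
                * α (⇑e ∘ Fin.cons j (Fin.cons k h)))) := by
            simp only [Finset.sum_const, Finset.card_univ, Fintype.card_fin, nsmul_eq_mul]
            push_cast; ring
    have hbridge2 : (∑ j, ∑ k, ∑ h : Fin m → Fin q, ∑ i, ∑ l,
          R i j k l * (α (⇑e ∘ Fin.cons i (Fin.cons l h))
            * α (⇑e ∘ Fin.cons j (Fin.cons k h))))
        = ∑ i, ∑ j, ∑ k, ∑ l, R i j k l * ∑ h : Fin m → Fin q,
            α (⇑e ∘ Fin.cons i (Fin.cons l h)) * α (⇑e ∘ Fin.cons j (Fin.cons k h)) := by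
      calc (∑ j, ∑ k, ∑ h : Fin m → Fin q, ∑ i, ∑ l,
          R i j k l * (α (⇑e ∘ Fin.cons i (Fin.cons l h))
            * α (⇑e ∘ Fin.cons j (Fin.cons k h))))
          = ∑ j, ∑ k, ∑ i, ∑ h : Fin m → Fin q, ∑ l,
              R i j k l * (α (⇑e ∘ Fin.cons i (Fin.cons l h))
                * α (⇑e ∘ Fin.cons j (Fin.cons k h))) :=
            Finset.sum_congr rfl fun _ _ => Finset.sum_congr rfl fun _ _ => Finset.sum_comm
        _ = ∑ j, ∑ k, ∑ i, ∑ l, ∑ h : Fin m → Fin q,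
              R i j k l * (α (⇑e ∘ Fin.cons i (Fin.cons l h))
                * α (⇑e ∘ Fin.cons j (Fin.cons k h))) :=
            Finset.sum_congr rfl fun _ _ => Finset.sum_congr rfl fun _ _ =>
              Finset.sum_congr rfl fun _ _ => Finset.sum_comm
        _ = ∑ j, ∑ i, ∑ k, ∑ l, ∑ h : Fin m → Fin q,
              R i j k l * (α (⇑e ∘ Fin.cons i (Fin.cons l h))
                * α (⇑e ∘ Fin.cons j (Fin.cons k h))) :=
            Finset.sum_congr rfl fun _ _ => Finset.sum_comm
        _ = ∑ i, ∑ j, ∑ k, ∑ l, ∑ h : Fin m → Fin q,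
              R i j k l * (α (⇑e ∘ Fin.cons i (Fin.cons l h))
                * α (⇑e ∘ Fin.cons j (Fin.cons k h))) :=
            Finset.sum_comm
        _ = ∑ i, ∑ j, ∑ k, ∑ l, R i j k l * ∑ h : Fin m → Fin q,
              α (⇑e ∘ Fin.cons i (Fin.cons l h)) * α (⇑e ∘ Fin.cons j (Fin.cons k h)) := by
            refine Finset.sum_congr rfl fun i _ => Finset.sum_congr rfl fun j _ =>
              Finset.sum_congr rfl fun k _ => Finset.sum_congr rfl fun l _ => ?_
            rw [Finset.mul_sum]
    have hform2 : ∀ a b c d : Fin q,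
        formInner ⇑e (iprod (e b) (iprod (e a) α)) (iprod (e d) (iprod (e c) α))
        = (1/(m.factorial : ℝ)) * ∑ h : Fin m → Fin q,
            α (⇑e ∘ Fin.cons a (Fin.cons b h)) * α (⇑e ∘ Fin.cons c (Fin.cons d h)) := by
      intro a b c d
      unfold formInner
      refine congrArg₂ (· * ·) rfl (Finset.sum_congr rfl fun h _ => ?_)
      rw [hcc a b h, hcc c d h]
      rfl
    have hkey : (∑ i : Fin q, ∑ j : Fin q, ∑ k : Fin q, ∑ l : Fin q, R i j k l *
          ∑ h : Fin m → Fin q,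
            α (⇑e ∘ Fin.cons i (Fin.cons l h)) * α (⇑e ∘ Fin.cons j (Fin.cons k h)))
        = -(1/2) * ∑ i : Fin q, ∑ j : Fin q, ∑ k : Fin q, ∑ l : Fin q, R i j k l *
            ∑ h : Fin m → Fin q,
              α (⇑e ∘ Fin.cons i (Fin.cons j h)) * α (⇑e ∘ Fin.cons k (Fin.cons l h)) := by
      refine aux8_keyAlg R
        (fun a b c d => ∑ h : Fin m → Fin q,
          α (⇑e ∘ Fin.cons a (Fin.cons b h)) * α (⇑e ∘ Fin.cons c (Fin.cons d h)))
        hR1 hR2 hR3 hBianchi ?_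
      intro a b c d
      rw [← Finset.sum_neg_distrib]
      refine Finset.sum_congr rfl fun h _ => ?_
      rw [hcc c d h, hcc d c h, aux8_swapFirst α (e c) (e d) (⇑e ∘ h)]
      ring
    have hfacne2 : (m.factorial : ℝ) ≠ 0 := Nat.cast_ne_zero.mpr m.factorial_ne_zero
    have hfac2 : ((Nat.factorial (m+1+1) : ℕ) : ℝ)
        = ((m:ℝ)+2) * (((m:ℝ)+1) * (m.factorial : ℝ)) := by
      rw [Nat.factorial_succ, Nat.factorial_succ]; push_cast; ring
    have h₂ : (1 / (Nat.factorial (m + 1 + 1) : ℝ)) *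
          (∑ t : Fin (m+2), ∑ s : Fin (m+1), ∑ f : Fin (m+2) → Fin q, ∑ i, ∑ l,
            R i (f t) ((f ∘ t.succAbove) s) l
              * α (⇑e ∘ Fin.cons i (Function.update (f ∘ t.succAbove) s l))
              * α (⇑e ∘ Fin.cons (f t) (f ∘ t.succAbove)))
        = -(1/2) * ∑ i, ∑ j, ∑ k, ∑ l, R i j k l *
            formInner ⇑e (iprod (e j) (iprod (e i) α)) (iprod (e l) (iprod (e k) α)) := by
      rw [hpart2, hbridge2]
      simp only [hform2]
      have hRHS2' : (∑ i : Fin q, ∑ j : Fin q, ∑ k : Fin q, ∑ l : Fin q, R i j k l *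
            ((1/(m.factorial : ℝ)) * ∑ h : Fin m → Fin q,
              α (⇑e ∘ Fin.cons i (Fin.cons j h)) * α (⇑e ∘ Fin.cons k (Fin.cons l h))))
          = (1/(m.factorial : ℝ)) * ∑ i : Fin q, ∑ j : Fin q, ∑ k : Fin q, ∑ l : Fin q,
              R i j k l * ∑ h : Fin m → Fin q,
                α (⇑e ∘ Fin.cons i (Fin.cons j h)) * α (⇑e ∘ Fin.cons k (Fin.cons l h)) := by
        simp only [Finset.mul_sum]
        refine Finset.sum_congr rfl fun i _ => Finset.sum_congr rfl fun j _ =>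
          Finset.sum_congr rfl fun k _ => Finset.sum_congr rfl fun l _ =>
          Finset.sum_congr rfl fun h _ => by ring
      have hscal : ∀ X : ℝ, (1 / (Nat.factorial (m+1+1) : ℝ)) *
            (((m:ℝ)+2) * (((m:ℝ)+1) * X)) = (1/(m.factorial:ℝ)) * X := by
        intro X
        have h2 : ((m:ℝ)+2) ≠ 0 := by positivity
        have h3 : ((m:ℝ)+1) ≠ 0 := by positivity
        rw [show ((Nat.factorial (m+1+1) : ℕ) : ℝ)
            = ((m:ℝ)+2) * (((m:ℝ)+1) * (m.factorial : ℝ)) from hfac2]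
        field_simp
      rw [hRHS2', hkey, hscal]
      ring
    rw [hLHS, mul_add, h₁, h₂]
    ring
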